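/- For any integer p ≥ 2 and any r > 0, the discrete Fourier coefficients θ_{j,p} = (1/p) Σ_{i=1}^p S(t_i) φ_j(t_i) of any function S in the Sobolev ball W¹_r satisfy the uniform bound max_{1 ≤ j ≤ p} |θ_{j,p} − θ_j| ≤ 2π √r · j / p, where θ_j = ∫₀¹ S(t) φ_j(t) dt. -/

import Mathlib

open MeasureTheory intervalIntegral

/-- The trigonometric basis on `[0,1]`. -/
noncomputable def trigBasis (j : ℕ) (x : ℝ) : ℝ :=
  if j = 1 then 1
  else if j % 2 = 0 then Real.sqrt 2 * Real.cos (2 * Real.pi * ((j / 2 : ℕ) : ℝ) * x)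
  else Real.sqrt 2 * Real.sin (2 * Real.pi * ((j / 2 : ℕ) : ℝ) * x)

/-- Derivative of the trigonometric basis. -/
noncomputable def trigDeriv (j : ℕ) (x : ℝ) : ℝ :=
  if j = 1 then 0
  else if j % 2 = 0 then
    -(Real.sqrt 2 * ((2 * Real.pi * ((j / 2 : ℕ) : ℝ)) * Real.sin (2 * Real.pi * ((j / 2 : ℕ) : ℝ) * x)))
  else Real.sqrt 2 * ((2 * Real.pi * ((j / 2 : ℕ) : ℝ)) * Real.cos (2 * Real.pi * ((j / 2 : ℕ) : ℝ) * x))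

lemma trigBasis_hasDerivAt (j : ℕ) (x : ℝ) :
    HasDerivAt (trigBasis j) (trigDeriv j x) x := by
  set c : ℝ := 2 * Real.pi * ((j / 2 : ℕ) : ℝ) with hc
  have hlin : HasDerivAt (fun y : ℝ => c * y) c x := by
    simpa using (hasDerivAt_id x).const_mul c
  unfold trigBasis trigDeriv
  by_cases h1 : j = 1
  · simp only [h1, if_pos rfl]
    exact hasDerivAt_const x 1
  · by_cases h2 : j % 2 = 0
    · simp only [h1, h2, if_neg, if_pos, if_false, if_true]
      have := (hlin.cos).const_mul (Real.sqrt 2)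
      refine this.congr_deriv ?_
      rw [hc]; ring
    · simp only [h1, h2, if_neg, if_false]
      have := (hlin.sin).const_mul (Real.sqrt 2)
      refine this.congr_deriv ?_
      rw [hc]; ring

lemma trigDeriv_continuous (j : ℕ) : Continuous (trigDeriv j) := by
  unfold trigDeriv
  by_cases h1 : j = 1
  · simp only [h1, if_pos rfl]; exact continuous_const
  · by_cases h2 : j % 2 = 0
    · simp only [h1, h2, if_neg, if_pos, if_false, if_true]
      fun_prop
    · simp only [h1, h2, if_neg, if_false]
      fun_prop

lemma abs_trigBasis_le (j : ℕ) (x : ℝ) : |trigBasis j x| ≤ Real.sqrt 2 := by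
  have h2 : (1:ℝ) ≤ Real.sqrt 2 := by
    rw [show (1:ℝ) = Real.sqrt 1 by simp]
    exact Real.sqrt_le_sqrt (by norm_num)
  have hs : (0:ℝ) ≤ Real.sqrt 2 := Real.sqrt_nonneg 2
  unfold trigBasis
  by_cases h1 : j = 1
  · rw [if_pos h1, abs_one]; exact h2
  · by_cases he : j % 2 = 0
    · simp only [h1, he, if_neg, if_pos, if_false, if_true]
      rw [abs_mul, abs_of_nonneg hs]
      calc Real.sqrt 2 * |Real.cos _| ≤ Real.sqrt 2 * 1 :=
            mul_le_mul_of_nonneg_left (Real.abs_cos_le_one _) hs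
        _ = Real.sqrt 2 := mul_one _
    · simp only [h1, he, if_neg, if_false]
      rw [abs_mul, abs_of_nonneg hs]
      calc Real.sqrt 2 * |Real.sin _| ≤ Real.sqrt 2 * 1 :=
            mul_le_mul_of_nonneg_left (Real.abs_sin_le_one _) hs
        _ = Real.sqrt 2 := mul_one _

lemma abs_trigDeriv_le (j : ℕ) (x : ℝ) :
    |trigDeriv j x| ≤ Real.sqrt 2 * Real.pi * j := by
  have hs : (0:ℝ) ≤ Real.sqrt 2 := Real.sqrt_nonneg 2
  have hpi : (0:ℝ) ≤ Real.pi := Real.pi_nonneg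
  have hhalf : ((j / 2 : ℕ) : ℝ) * 2 ≤ (j : ℝ) := by
    have := Nat.div_mul_le_self j 2
    exact_mod_cast this
  have hhn : (0:ℝ) ≤ ((j / 2 : ℕ) : ℝ) := Nat.cast_nonneg _
  have key : ∀ t : ℝ, |t| ≤ 1 →
      |Real.sqrt 2 * ((2 * Real.pi * ((j / 2 : ℕ) : ℝ)) * t)| ≤ Real.sqrt 2 * Real.pi * j := by
    intro t ht
    rw [abs_mul, abs_mul, abs_of_nonneg hs,
      abs_of_nonneg (by positivity : (0:ℝ) ≤ 2 * Real.pi * ((j / 2 : ℕ) : ℝ))]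
    calc Real.sqrt 2 * (2 * Real.pi * ((j / 2 : ℕ) : ℝ) * |t|)
        ≤ Real.sqrt 2 * (2 * Real.pi * ((j / 2 : ℕ) : ℝ) * 1) := by
          apply mul_le_mul_of_nonneg_left _ hs
          exact mul_le_mul_of_nonneg_left ht (by positivity)
      _ ≤ Real.sqrt 2 * Real.pi * j := by
          rw [mul_one]
          have : 2 * Real.pi * ((j / 2 : ℕ) : ℝ) ≤ Real.pi * j := by nlinarith
          nlinarith
  unfold trigDeriv
  by_cases h1 : j = 1
  · simp only [h1, if_pos rfl]
    simp
    positivity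
  · by_cases he : j % 2 = 0
    · simp only [h1, he, if_neg, if_pos, if_false, if_true]
      rw [abs_neg]
      exact key _ (Real.abs_sin_le_one _)
    · simp only [h1, he, if_neg, if_false]
      exact key _ (Real.abs_cos_le_one _)

/-- Cauchy–Schwarz on `[0,1]`: L¹ norm is at most L² norm. -/
lemma l1_le_sqrt_l2 (u : ℝ → ℝ) (hu : Continuous u) :
    (∫ t in (0:ℝ)..1, |u t|) ≤ Real.sqrt (∫ t in (0:ℝ)..1, u t ^ 2) := by
  set A : ℝ := ∫ t in (0:ℝ)..1, |u t| with hA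
  set B : ℝ := ∫ t in (0:ℝ)..1, u t ^ 2 with hB
  have hA0 : 0 ≤ A :=
    intervalIntegral.integral_nonneg (by norm_num) (fun t _ => abs_nonneg _)
  have hB0 : 0 ≤ B :=
    intervalIntegral.integral_nonneg (by norm_num) (fun t _ => sq_nonneg _)
  rw [Real.le_sqrt hA0 hB0]
  have hnn : 0 ≤ ∫ t in (0:ℝ)..1, (|u t| - A) ^ 2 :=
    intervalIntegral.integral_nonneg (by norm_num) (fun t _ => sq_nonneg _)
  have hexp : (∫ t in (0:ℝ)..1, (|u t| - A) ^ 2) = B - A ^ 2 := by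
    have h1 : (∫ t in (0:ℝ)..1, (|u t| - A) ^ 2)
        = ∫ t in (0:ℝ)..1, (u t ^ 2 - 2 * A * |u t| + A ^ 2) := by
      apply intervalIntegral.integral_congr
      intro t _
      show (|u t| - A) ^ 2 = u t ^ 2 - 2 * A * |u t| + A ^ 2
      rw [sub_sq, sq_abs]
      ring
    rw [h1, intervalIntegral.integral_add, intervalIntegral.integral_sub,
        intervalIntegral.integral_const_mul, intervalIntegral.integral_const]
    · simp [← hA, ← hB]
      ring
    · exact (hu.pow 2).intervalIntegrable 0 1
    · exact (continuous_const.mul hu.abs).intervalIntegrable 0 1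
    · exact ((hu.pow 2).sub (continuous_const.mul hu.abs)).intervalIntegrable 0 1
    · exact intervalIntegrable_const
  nlinarith

/-- Riemann-sum quadrature error bound. -/
lemma quad_bound (p : ℕ) (hp : 0 < p) (g G : ℝ → ℝ)
    (hg : ∀ x, HasDerivAt g (G x) x) (hG : Continuous G) :
    |(1 / (p:ℝ)) * (∑ i ∈ Finset.Icc 1 p, g ((i:ℝ)/p)) - ∫ t in (0:ℝ)..1, g t|
      ≤ (1/(p:ℝ)) * ∫ t in (0:ℝ)..1, |G t| := by
  have hgc : Continuous g := by
    rw [continuous_iff_continuousAt]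
    exact fun x => (hg x).continuousAt
  have hp0 : (0:ℝ) < p := by exact_mod_cast hp
  set a : ℕ → ℝ := fun i => (i:ℝ) / p with ha
  have hstep : ∀ k : ℕ, a (k+1) - a k = 1 / p := by
    intro k
    simp only [ha]
    push_cast
    field_simp
    ring
  have hle : ∀ k : ℕ, a k ≤ a (k+1) := by
    intro k
    have := hstep k
    have : (0:ℝ) < 1 / p := by positivity
    linarith [hstep k]
  -- the total integral as a sum over subintervals
  have hsum : (∑ k ∈ Finset.range p, ∫ t in a k..a (k+1), g t) = ∫ t in (0:ℝ)..1, g t := by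
    have := intervalIntegral.sum_integral_adjacent_intervals
      (a := a) (n := p) (f := g) (μ := volume)
      (fun k _ => hgc.intervalIntegrable _ _)
    have ha0 : a 0 = 0 := by simp [ha]
    have hap : a p = 1 := by
      simp only [ha]; exact div_self (ne_of_gt hp0)
    rw [this, ha0, hap]
  have hsumG : (∑ k ∈ Finset.range p, ∫ t in a k..a (k+1), |G t|) = ∫ t in (0:ℝ)..1, |G t| := by
    have := intervalIntegral.sum_integral_adjacent_intervals
      (a := a) (n := p) (f := fun t => |G t|) (μ := volume)
      (fun k _ => hG.abs.intervalIntegrable _ _)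
    have ha0 : a 0 = 0 := by simp [ha]
    have hap : a p = 1 := by
      simp only [ha]; exact div_self (ne_of_gt hp0)
    rw [this, ha0, hap]
  -- the discrete sum as a sum of constant integrals
  have hdisc : (1 / (p:ℝ)) * (∑ i ∈ Finset.Icc 1 p, g ((i:ℝ)/p))
      = ∑ k ∈ Finset.range p, ∫ _ in a k..a (k+1), g (a (k+1)) := by
    rw [← Finset.Ico_add_one_right_eq_Icc, Finset.sum_Ico_eq_sum_range]
    rw [Finset.mul_sum]
    apply Finset.sum_congr rfl
    intro k _
    rw [intervalIntegral.integral_const, hstep k]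
    simp only [smul_eq_mul, ha]
    push_cast
    ring_nf
  rw [hdisc, ← hsum, ← Finset.sum_sub_distrib]
  have hterm : ∀ k ∈ Finset.range p,
      |(∫ _ in a k..a (k+1), g (a (k+1))) - ∫ t in a k..a (k+1), g t|
        ≤ (1/(p:ℝ)) * ∫ t in a k..a (k+1), |G t| := by
    intro k _
    set c := a k
    set d := a (k+1)
    have hcd : c ≤ d := hle k
    have hGint : ∀ x y : ℝ, IntervalIntegrable G volume x y := fun x y =>
      hG.intervalIntegrable x y
    set K : ℝ := ∫ t in c..d, |G t| with hK
    have hbound : ∀ t ∈ Set.Icc c d, |g d - g t| ≤ K := by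
      intro t ht
      have ftc : ∫ s in t..d, G s = g d - g t :=
        intervalIntegral.integral_eq_sub_of_hasDerivAt (fun x _ => hg x) (hGint t d)
      rw [← ftc]
      calc |∫ s in t..d, G s| ≤ ∫ s in t..d, |G s| :=
            intervalIntegral.abs_integral_le_integral_abs ht.2
        _ ≤ K := by
            have hadd : (∫ s in c..t, |G s|) + ∫ s in t..d, |G s| = K :=
              intervalIntegral.integral_add_adjacent_intervals
                (hG.abs.intervalIntegrable c t) (hG.abs.intervalIntegrable t d)
            have h0 : 0 ≤ ∫ s in c..t, |G s| :=
              intervalIntegral.integral_nonneg ht.1 (fun s _ => abs_nonneg _)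
            linarith
    have hsub : (∫ _ in c..d, g d) - ∫ t in c..d, g t = ∫ t in c..d, (g d - g t) := by
      rw [intervalIntegral.integral_sub intervalIntegrable_const
        (hgc.intervalIntegrable c d)]
    rw [hsub]
    calc |∫ t in c..d, (g d - g t)| ≤ ∫ t in c..d, |g d - g t| :=
          intervalIntegral.abs_integral_le_integral_abs hcd
      _ ≤ ∫ _ in c..d, K := by
          apply intervalIntegral.integral_mono_on hcd
            ((continuous_const.sub hgc).abs.intervalIntegrable c d)
            intervalIntegrable_const hbound
      _ = (1/(p:ℝ)) * K := by
          rw [intervalIntegral.integral_const, smul_eq_mul]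
          rw [show d - c = 1 / p from hstep k]
  calc |∑ k ∈ Finset.range p, ((∫ _ in a k..a (k+1), g (a (k+1))) - ∫ t in a k..a (k+1), g t)|
      ≤ ∑ k ∈ Finset.range p, |(∫ _ in a k..a (k+1), g (a (k+1))) - ∫ t in a k..a (k+1), g t| :=
        Finset.abs_sum_le_sum_abs _ _
    _ ≤ ∑ k ∈ Finset.range p, (1/(p:ℝ)) * ∫ t in a k..a (k+1), |G t| :=
        Finset.sum_le_sum hterm
    _ = (1/(p:ℝ)) * ∫ t in (0:ℝ)..1, |G t| := by
        rw [← Finset.mul_sum, hsumG]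

theorem stmt4 (p : ℕ) (hp : 2 ≤ p) (r : ℝ) (hr : 0 < r)
    (S S' : ℝ → ℝ)
    (hper : Function.Periodic S 1)
    (hderiv : ∀ x, HasDerivAt S (S' x) x)
    (hS'cont : Continuous S')
    (hball : (∫ t in (0:ℝ)..1, S t ^ 2) + (∫ t in (0:ℝ)..1, S' t ^ 2) ≤ r) :
    ∀ j : ℕ, 1 ≤ j → j ≤ p →
      |(1 / (p:ℝ)) * (∑ i ∈ Finset.Icc 1 p, S ((i:ℝ)/p) * trigBasis j ((i:ℝ)/p))
          - ∫ t in (0:ℝ)..1, S t * trigBasis j t|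
        ≤ 2 * Real.pi * Real.sqrt r * (j:ℝ) / (p:ℝ) := by
  intro j hj1 hjp
  have hp0 : 0 < p := lt_of_lt_of_le (by norm_num) hp
  have hp0' : (0:ℝ) < p := by exact_mod_cast hp0
  have hScont : Continuous S := by
    rw [continuous_iff_continuousAt]
    exact fun x => (hderiv x).continuousAt
  have htc : Continuous (trigBasis j) := by
    rw [continuous_iff_continuousAt]
    exact fun x => (trigBasis_hasDerivAt j x).continuousAt
  set g : ℝ → ℝ := fun t => S t * trigBasis j t with hgdef
  set G : ℝ → ℝ := fun t => S' t * trigBasis j t + S t * trigDeriv j t with hGdef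
  have hg : ∀ x, HasDerivAt g (G x) x := fun x =>
    (hderiv x).mul (trigBasis_hasDerivAt j x)
  have hGc : Continuous G :=
    (hS'cont.mul htc).add (hScont.mul (trigDeriv_continuous j))
  have hmain := quad_bound p hp0 g G hg hGc
  -- bound the integral of |G|
  have hS2 : (∫ t in (0:ℝ)..1, S t ^ 2) ≤ r := by
    have : 0 ≤ ∫ t in (0:ℝ)..1, S' t ^ 2 :=
      intervalIntegral.integral_nonneg (by norm_num) (fun t _ => sq_nonneg _)
    linarith
  have hS'2 : (∫ t in (0:ℝ)..1, S' t ^ 2) ≤ r := by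
    have : 0 ≤ ∫ t in (0:ℝ)..1, S t ^ 2 :=
      intervalIntegral.integral_nonneg (by norm_num) (fun t _ => sq_nonneg _)
    linarith
  have hSl1 : (∫ t in (0:ℝ)..1, |S t|) ≤ Real.sqrt r :=
    le_trans (l1_le_sqrt_l2 S hScont) (Real.sqrt_le_sqrt hS2)
  have hS'l1 : (∫ t in (0:ℝ)..1, |S' t|) ≤ Real.sqrt r :=
    le_trans (l1_le_sqrt_l2 S' hS'cont) (Real.sqrt_le_sqrt hS'2)
  have hGpt : ∀ t ∈ Set.Icc (0:ℝ) 1,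
      |G t| ≤ Real.sqrt 2 * |S' t| + Real.sqrt 2 * Real.pi * j * |S t| := by
    intro t _
    calc |G t| ≤ |S' t * trigBasis j t| + |S t * trigDeriv j t| := abs_add_le _ _
      _ ≤ Real.sqrt 2 * |S' t| + Real.sqrt 2 * Real.pi * j * |S t| := by
          rw [abs_mul, abs_mul]
          apply add_le_add
          · rw [mul_comm (Real.sqrt 2)]
            exact mul_le_mul_of_nonneg_left (abs_trigBasis_le j t) (abs_nonneg _)
          · rw [mul_comm _ (|S t|)]
            exact mul_le_mul_of_nonneg_left (abs_trigDeriv_le j t) (abs_nonneg _)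
  have hGint : (∫ t in (0:ℝ)..1, |G t|)
      ≤ Real.sqrt 2 * (∫ t in (0:ℝ)..1, |S' t|)
        + Real.sqrt 2 * Real.pi * j * (∫ t in (0:ℝ)..1, |S t|) := by
    have h1 : (∫ t in (0:ℝ)..1, |G t|)
        ≤ ∫ t in (0:ℝ)..1, (Real.sqrt 2 * |S' t| + Real.sqrt 2 * Real.pi * j * |S t|) := by
      apply intervalIntegral.integral_mono_on (by norm_num)
        (hGc.abs.intervalIntegrable 0 1)
        (((continuous_const.mul hS'cont.abs).add
          (continuous_const.mul hScont.abs)).intervalIntegrable 0 1) hGpt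
    rw [intervalIntegral.integral_add (f := fun t => Real.sqrt 2 * |S' t|)
      (g := fun t => Real.sqrt 2 * Real.pi * j * |S t|)
      ((continuous_const.mul hS'cont.abs).intervalIntegrable 0 1)
      ((continuous_const.mul hScont.abs).intervalIntegrable 0 1),
      intervalIntegral.integral_const_mul, intervalIntegral.integral_const_mul] at h1
    exact h1
  have hjr : (1:ℝ) ≤ (j:ℝ) := by exact_mod_cast hj1
  have hsr : (0:ℝ) ≤ Real.sqrt r := Real.sqrt_nonneg r
  have hnum : Real.sqrt 2 * Real.sqrt r + Real.sqrt 2 * Real.pi * j * Real.sqrt r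
      ≤ 2 * Real.pi * Real.sqrt r * j := by
    have hs2 : Real.sqrt 2 ^ 2 = 2 := Real.sq_sqrt (by norm_num)
    have hs2n : (0:ℝ) ≤ Real.sqrt 2 := Real.sqrt_nonneg 2
    have hs2le : Real.sqrt 2 ≤ 1.5 := by nlinarith
    have hpi : (3:ℝ) ≤ Real.pi := Real.pi_gt_three.le
    have hpij : (3:ℝ) ≤ Real.pi * j := by nlinarith
    have key : Real.sqrt 2 + Real.sqrt 2 * (Real.pi * (j:ℝ)) ≤ 2 * (Real.pi * (j:ℝ)) := by
      nlinarith [mul_le_mul_of_nonneg_left hpij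
        (show (0:ℝ) ≤ 2 - Real.sqrt 2 by linarith)]
    nlinarith [mul_le_mul_of_nonneg_right key hsr]
  have hGfinal : (∫ t in (0:ℝ)..1, |G t|) ≤ 2 * Real.pi * Real.sqrt r * j := by
    have h2 : Real.sqrt 2 * (∫ t in (0:ℝ)..1, |S' t|) ≤ Real.sqrt 2 * Real.sqrt r :=
      mul_le_mul_of_nonneg_left hS'l1 (Real.sqrt_nonneg 2)
    have h3 : Real.sqrt 2 * Real.pi * j * (∫ t in (0:ℝ)..1, |S t|)
        ≤ Real.sqrt 2 * Real.pi * j * Real.sqrt r :=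
      mul_le_mul_of_nonneg_left hSl1 (by positivity)
    linarith
  calc |(1 / (p:ℝ)) * (∑ i ∈ Finset.Icc 1 p, S ((i:ℝ)/p) * trigBasis j ((i:ℝ)/p))
          - ∫ t in (0:ℝ)..1, S t * trigBasis j t|
      ≤ (1/(p:ℝ)) * ∫ t in (0:ℝ)..1, |G t| := hmain
    _ ≤ (1/(p:ℝ)) * (2 * Real.pi * Real.sqrt r * j) := by
        apply mul_le_mul_of_nonneg_left hGfinal (by positivity)
    _ = 2 * Real.pi * Real.sqrt r * (j:ℝ) / (p:ℝ) := by ring
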